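/- Let B = (b_1,...,b_n) be a weakly increasing word and let w be any rearrangement of B. Among all permutations σ ∈ S_n with (b_{σ⁻¹(1)},...,b_{σ⁻¹(n)}) = w, there is a unique one of minimal Coxeter length, and its length equals the number of inversions of the word w (pairs i<j with w_i > w_j). -/

import Mathlib

/-- The number of inversions of a word `w`: pairs `i < j` with `w i > w j`. -/
def invNum {n : ℕ} (w : Fin n → ℕ) : ℕ :=
  (Finset.univ.filter (fun p : Fin n × Fin n => p.1 < p.2 ∧ w p.2 < w p.1)).card

/-- The Coxeter length of a permutation of `Fin n`: its number of inversions. -/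
def permLen {n : ℕ} (σ : Equiv.Perm (Fin n)) : ℕ :=
  (Finset.univ.filter (fun p : Fin n × Fin n => p.1 < p.2 ∧ σ p.2 < σ p.1)).card

section aux

variable {n : ℕ} {b : Fin n → ℕ} {w : Fin n → ℕ}

private lemma map_mem {σ : Equiv.Perm (Fin n)} (hb : Monotone b) (hσ : b ∘ ⇑σ.symm = w) :
    ∀ p ∈ (Finset.univ.filter (fun p : Fin n × Fin n => p.1 < p.2 ∧ w p.2 < w p.1)),
      (σ.symm p.2, σ.symm p.1) ∈
        (Finset.univ.filter (fun p : Fin n × Fin n => p.1 < p.2 ∧ σ p.2 < σ p.1)) := by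
  rintro ⟨i, j⟩ hp
  simp only [Finset.mem_filter, Finset.mem_univ, true_and] at hp ⊢
  obtain ⟨hij, hw⟩ := hp
  have hwi : ∀ k, w k = b (σ.symm k) := fun k => (congrFun hσ k).symm
  have h1 : σ.symm j < σ.symm i := by
    by_contra h
    push_neg at h
    have := hb h
    rw [← hwi i, ← hwi j] at this
    exact absurd this hw.not_ge
  exact ⟨h1, by simpa using hij⟩

private lemma map_injOn (σ : Equiv.Perm (Fin n)) :
    Set.InjOn (fun p : Fin n × Fin n => (σ.symm p.2, σ.symm p.1))
      ↑(Finset.univ.filter (fun p : Fin n × Fin n => p.1 < p.2 ∧ w p.2 < w p.1)) := by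
  rintro ⟨i, j⟩ _ ⟨i', j'⟩ _ h
  simp only [Prod.mk.injEq, EmbeddingLike.apply_eq_iff_eq] at h
  simp [h.1, h.2]

/-- Any permutation realizing `w` has length at least `invNum w`. -/
private lemma invNum_le_permLen (hb : Monotone b) {σ : Equiv.Perm (Fin n)}
    (hσ : b ∘ ⇑σ.symm = w) : invNum w ≤ permLen σ :=
  Finset.card_le_card_of_injOn _ (map_mem hb hσ) (map_injOn σ)

/-- If moreover `σ` inverts a pair of equal `b`-values, the inequality is strict. -/
private lemma invNum_lt_permLen (hb : Monotone b) {σ : Equiv.Perm (Fin n)}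
    (hσ : b ∘ ⇑σ.symm = w) {i j : Fin n} (hij : i < j) (hbij : b i = b j)
    (hσij : σ j < σ i) : invNum w < permLen σ := by
  classical
  set S := (Finset.univ.filter (fun p : Fin n × Fin n => p.1 < p.2 ∧ w p.2 < w p.1))
  set T := (Finset.univ.filter (fun p : Fin n × Fin n => p.1 < p.2 ∧ σ p.2 < σ p.1))
  have hmemT : (i, j) ∈ T := by simp [T, hij, hσij]
  have hmap : ∀ p ∈ S, (σ.symm p.2, σ.symm p.1) ∈ T.erase (i, j) := by
    rintro ⟨a, c⟩ hp
    refine Finset.mem_erase.2 ⟨?_, map_mem hb hσ _ hp⟩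
    simp only [Finset.mem_filter, Finset.mem_univ, true_and, S] at hp
    intro h
    have h1 : σ.symm c = i := congrArg Prod.fst h
    have h2 : σ.symm a = j := congrArg Prod.snd h
    have hwi : ∀ k, w k = b (σ.symm k) := fun k => (congrFun hσ k).symm
    have : w c < w a := hp.2
    rw [hwi c, hwi a, h1, h2, hbij] at this
    exact lt_irrefl _ this
  have h1 : invNum w ≤ (T.erase (i, j)).card :=
    Finset.card_le_card_of_injOn _ hmap (map_injOn σ)
  have h2 : (T.erase (i, j)).card < T.card := Finset.card_erase_lt_of_mem hmemT
  exact lt_of_le_of_lt h1 h2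

/-- The sorting permutation has length at most `invNum w`. -/
private lemma permLen_sort_le (hb : Monotone b)
    (hws : w ∘ ⇑(Tuple.sort w) = b) : permLen (Tuple.sort w) ≤ invNum w := by
  classical
  set s := Tuple.sort w with hs
  have hst : ∀ i j, i < j → w (s i) = w (s j) → s i < s j :=
    ((Tuple.eq_sort_iff (f := w) (σ := s)).mp hs).2
  apply Finset.card_le_card_of_injOn (fun p : Fin n × Fin n => (s p.2, s p.1))
  · rintro ⟨p, q⟩ hp
    change (p, q) ∈ Finset.univ.filter (fun p : Fin n × Fin n => p.1 < p.2 ∧ s p.2 < s p.1) at hp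
    change (s q, s p) ∈ Finset.univ.filter (fun p : Fin n × Fin n => p.1 < p.2 ∧ w p.2 < w p.1)
    simp only [Finset.mem_filter, Finset.mem_univ, true_and] at hp ⊢
    obtain ⟨hpq, hsq⟩ := hp
    have hbpq : b p ≤ b q := hb hpq.le
    have hbpq' : b p < b q := by
      rcases hbpq.lt_or_eq with h | h
      · exact h
      · exfalso
        have := hst p q hpq (by rw [← congrFun hws p, ← congrFun hws q] at h; exact h)
        exact absurd this hsq.asymm
    refine ⟨hsq, ?_⟩
    rw [← congrFun hws p, ← congrFun hws q] at hbpq'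
    exact hbpq'
  · rintro ⟨i, j⟩ _ ⟨i', j'⟩ _ h
    simp only [Prod.mk.injEq, EmbeddingLike.apply_eq_iff_eq] at h
    simp [h.1, h.2]

end aux

/-- Let `b` be a weakly increasing word and `w` a rearrangement of `b`.  Among all
permutations `σ` with `(b ∘ σ.symm) = w` (i.e. `w i = b (σ⁻¹ i)` for all `i`), there is a
unique one of minimal Coxeter length, and its length equals the number of inversions of
the word `w`. -/
theorem stmt1 {n : ℕ} (b : Fin n → ℕ) (hb : Monotone b) (w : Fin n → ℕ)
    (hw : ∃ σ : Equiv.Perm (Fin n), w = b ∘ ⇑σ.symm) :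
    ∃! σ : Equiv.Perm (Fin n),
      (b ∘ ⇑σ.symm = w ∧
        (∀ τ : Equiv.Perm (Fin n), b ∘ ⇑τ.symm = w → permLen σ ≤ permLen τ)) ∧
      permLen σ = invNum w := by
  classical
  obtain ⟨σ0, hσ0⟩ := hw
  have hwσ0 : w ∘ ⇑σ0 = b := by
    funext i
    simp [hσ0]
  set s := Tuple.sort w with hs
  have hws : w ∘ ⇑s = b := by
    have := Tuple.unique_monotone (f := w) (σ := σ0) (τ := s)
      (by rw [hwσ0]; exact hb) (Tuple.monotone_sort w)
    rw [← this, hwσ0]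
  have hbs : b ∘ ⇑s.symm = w := by
    funext i
    have := congrFun hws (s.symm i)
    simpa using this.symm
  have hlen : permLen s = invNum w :=
    le_antisymm (permLen_sort_le hb hws) (invNum_le_permLen hb hbs)
  refine ⟨s, ⟨⟨hbs, fun τ hτ => hlen ▸ invNum_le_permLen hb hτ⟩, hlen⟩, ?_⟩
  rintro σ ⟨⟨hσw, -⟩, hσlen⟩
  have hwσ : ∀ i, w (σ i) = b i := by
    intro i
    have := congrFun hσw (σ i)
    simpa using this.symm
  rw [hs]
  rw [Tuple.eq_sort_iff]
  constructor
  · have : w ∘ ⇑σ = b := funext hwσ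
    rw [this]; exact hb
  · intro i j hij heq
    rw [hwσ i, hwσ j] at heq
    by_contra h
    push_neg at h
    have hne : σ j ≠ σ i := fun hc => hij.ne (σ.injective hc.symm)
    have hlt : σ j < σ i := lt_of_le_of_ne h hne
    exact absurd hσlen (invNum_lt_permLen hb hσw hij heq hlt).ne'
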